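/- Let B be a left-regular bipartite graph with left degree k, left side I and right side J, and let G(B) be the graph built from B by: fixing for each pigeon i an enumeration of its k edges; adding for each pair of distinct pigeons i ≠ i' and pair of edge-indices (c, c') leading to a common hole an injectivity gadget D(i,i',c,c'); and replacing precoloured vertices with vertices of a pre-colouring gadget (a path power graph where every k consecutive vertices form a clique). Then G(B) is k-colourable if and only if there is an injective mapping of I into J respecting the edges of B. -/

import Mathlib

section ColouringReduction

variable {I J : Type} [Fintype I] [DecidableEq I] [DecidableEq J]

/-- Collisions of a left-regular bipartite graph with left side `I` (pigeons),
right side `J` (holes) and edge enumeration `e : I → Fin k → J` (the `c`-th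
edge of pigeon `i` leads to hole `e i c`): quadruples `(i, i', c, c')` with
`i ≠ i'` such that the `c`-th edge of `i` and the `c'`-th edge of `i'` lead
to a common hole. -/
def Coll (k : ℕ) (e : I → Fin k → J) : Type :=
  {q : (I × I) × Fin k × Fin k // q.1.1 ≠ q.1.2 ∧ e q.1.1 q.2.1 = e q.1.2 q.2.2}

instance (k : ℕ) (e : I → Fin k → J) : Fintype (Coll k e) := by
  unfold Coll; infer_instance

/-- Internal vertices of the injectivity gadget `D(i,i',c,c')` attached to a
collision `q`: a left `k`-clique (flag `false`) and a right `k`-clique (flag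
`true`).  When `c ≠ c'` the two cliques share the vertex `l_k = r_k`, so in
that case the right-clique slot of index `k-1` is excluded (it is represented
by the left vertex of index `k-1`). -/
def GadV (k : ℕ) (e : I → Fin k → J) : Type :=
  Σ q : Coll k e,
    {x : Bool × Fin k // ¬ (x.1 = true ∧ (x.2 : ℕ) = k - 1 ∧ q.1.2.1 ≠ q.1.2.2)}

/-- The left-clique vertex `l_{a+1}` of the gadget of collision `q`. -/
def Lv {k : ℕ} {e : I → Fin k → J} (q : Coll k e) (a : Fin k) : GadV k e :=
  ⟨q, ⟨(false, a), by simp⟩⟩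

/-- The right-clique vertex `r_{a+1}` of the gadget of collision `q`; when
`c ≠ c'` the last right vertex `r_k` is identified with `l_k`. -/
def Rv {k : ℕ} {e : I → Fin k → J} (q : Coll k e) (a : Fin k) : GadV k e :=
  if h : (a : ℕ) = k - 1 ∧ q.1.2.1 ≠ q.1.2.2 then
    ⟨q, ⟨(false, a), by simp⟩⟩
  else
    ⟨q, ⟨(true, a), fun hcon => h ⟨hcon.2.1, hcon.2.2⟩⟩⟩

/-- The number of vertices of the pre-colouring gadget: enough room to give
each collision gadget its two (formerly precoloured) vertices. -/
def Mtotal (k : ℕ) (e : I → Fin k → J) : ℕ :=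
  2 * Fintype.card (Coll k e) * k + k

/-- A fixed enumeration of the collisions. -/
noncomputable def collIdx {k : ℕ} {e : I → Fin k → J} (q : Coll k e) : ℕ :=
  (Fintype.equivFin (Coll k e) q : ℕ)

/-- The position in the pre-colouring gadget of the vertex `w` of the gadget
of collision `q = (i,i',c,c')` (formerly precoloured `c`); its position is
congruent to `c` modulo `k`. -/
noncomputable def wpos {k : ℕ} {e : I → Fin k → J} (q : Coll k e) : Fin (Mtotal k e) :=
  ⟨2 * collIdx q * k + (q.1.2.1 : ℕ), by
    have h1 : collIdx q + 1 ≤ Fintype.card (Coll k e) :=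
      Nat.succ_le_of_lt (Fintype.equivFin (Coll k e) q).isLt
    have h2 : (q.1.2.1 : ℕ) < k := q.1.2.1.isLt
    have h3 : (2 * collIdx q + 2) * k ≤ 2 * Fintype.card (Coll k e) * k :=
      Nat.mul_le_mul_right k (by omega)
    unfold Mtotal
    nlinarith⟩

/-- The position in the pre-colouring gadget of the vertex `w'` of the gadget
of collision `q = (i,i',c,c')` (formerly precoloured `c'`); its position is
congruent to `c'` modulo `k`. -/
noncomputable def wpos' {k : ℕ} {e : I → Fin k → J} (q : Coll k e) : Fin (Mtotal k e) :=
  ⟨(2 * collIdx q + 1) * k + (q.1.2.2 : ℕ), by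
    have h1 : collIdx q + 1 ≤ Fintype.card (Coll k e) :=
      Nat.succ_le_of_lt (Fintype.equivFin (Coll k e) q).isLt
    have h2 : (q.1.2.2 : ℕ) < k := q.1.2.2.isLt
    have h3 : (2 * collIdx q + 2) * k ≤ 2 * Fintype.card (Coll k e) * k :=
      Nat.mul_le_mul_right k (by omega)
    unfold Mtotal
    nlinarith⟩

/-- Vertices of the graph `G(B)`: the pigeon vertices, the internal gadget
vertices, and the vertices `u_1,…,u_M` of the pre-colouring gadget. -/
def ColV (k : ℕ) (e : I → Fin k → J) : Type :=
  I ⊕ GadV k e ⊕ Fin (Mtotal k e)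

/-- A pigeon vertex of `G(B)`. -/
def pigV {k : ℕ} {e : I → Fin k → J} (i : I) : ColV k e := Sum.inl i

/-- An internal gadget vertex of `G(B)`. -/
def gadV {k : ℕ} {e : I → Fin k → J} (x : GadV k e) : ColV k e :=
  Sum.inr (Sum.inl x)

/-- A pre-colouring gadget vertex of `G(B)`. -/
def preV {k : ℕ} {e : I → Fin k → J} (t : Fin (Mtotal k e)) : ColV k e :=
  Sum.inr (Sum.inr t)

/-- The graph `G(B)` built from the left-regular bipartite graph `B` given by
`e : I → Fin k → J`: for every collision `(i,i',c,c')` an injectivity gadget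
`D(i,i',c,c')` consisting of two `k`-cliques (joined by an `l_k`–`r_k` edge
when `c = c'`, and sharing the vertex `l_k = r_k` when `c ≠ c'`), with pigeon
`i` joined to `l_1`, pigeon `i'` joined to `r_1`, a vertex joined to
`l_2,…,l_{k-1}` and a vertex joined to `r_2,…,r_{k-1}`; these latter
(formerly precoloured) vertices are the vertices `u_t` of the pre-colouring
gadget, in which `u_s ∼ u_t` iff `0 < |s - t| < k`, the vertex formerly
precoloured `c` being a fresh `u_t` with `t ≡ c (mod k)`. -/
def colourGraph (k : ℕ) (e : I → Fin k → J) : SimpleGraph (ColV k e) :=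
  SimpleGraph.fromRel (fun x y =>
    (∃ s t : Fin (Mtotal k e), (s : ℕ) < (t : ℕ) ∧ (t : ℕ) < (s : ℕ) + k ∧
      x = preV s ∧ y = preV t) ∨
    (∃ (q : Coll k e) (a b : Fin k), a ≠ b ∧
      x = gadV (Lv q a) ∧ y = gadV (Lv q b)) ∨
    (∃ (q : Coll k e) (a b : Fin k), a ≠ b ∧
      x = gadV (Rv q a) ∧ y = gadV (Rv q b)) ∨
    (∃ (q : Coll k e) (a : Fin k), q.1.2.1 = q.1.2.2 ∧ (a : ℕ) = k - 1 ∧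
      x = gadV (Lv q a) ∧ y = gadV (Rv q a)) ∨
    (∃ (q : Coll k e) (a : Fin k), (a : ℕ) = 0 ∧
      x = pigV q.1.1.1 ∧ y = gadV (Lv q a)) ∨
    (∃ (q : Coll k e) (a : Fin k), (a : ℕ) = 0 ∧
      x = pigV q.1.1.2 ∧ y = gadV (Rv q a)) ∨
    (∃ (q : Coll k e) (a : Fin k), 1 ≤ (a : ℕ) ∧ (a : ℕ) ≤ k - 2 ∧
      x = preV (wpos q) ∧ y = gadV (Lv q a)) ∨
    (∃ (q : Coll k e) (a : Fin k), 1 ≤ (a : ℕ) ∧ (a : ℕ) ≤ k - 2 ∧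
      x = preV (wpos' q) ∧ y = gadV (Rv q a)))


private lemma mod_ne_of_window {k s t : ℕ} (h1 : s < t) (h2 : t < s + k) :
    s % k ≠ t % k := by
  intro h
  have hd : k ∣ t - s := (Nat.modEq_iff_dvd' h1.le).1 h
  have := Nat.le_of_dvd (by omega) hd
  omega

private lemma exists_third {k : ℕ} (hk : 3 ≤ k) (a b : Fin k) :
    ∃ x : Fin k, x ≠ a ∧ x ≠ b := by
  obtain ⟨n, hn, hna, hnb⟩ : ∃ n, n < k ∧ n ≠ a.val ∧ n ≠ b.val := by
    have ha := a.isLt; have hb := b.isLt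
    by_cases h0 : a.val ≠ 0 ∧ b.val ≠ 0
    · exact ⟨0, by omega⟩
    · by_cases h1 : a.val ≠ 1 ∧ b.val ≠ 1
      · exact ⟨1, by omega⟩
      · exact ⟨2, by omega⟩
  exact ⟨⟨n, hn⟩, fun h => hna (congrArg Fin.val h), fun h => hnb (congrArg Fin.val h)⟩

private lemma exists_perm2 {k : ℕ} (hk : 3 ≤ k) (x y : Fin k) (hxy : x ≠ y) :
    ∃ σ : Fin k ≃ Fin k, σ ⟨0, by omega⟩ = x ∧ σ ⟨k - 1, by omega⟩ = y := by
  have h0m : (⟨0, by omega⟩ : Fin k) ≠ ⟨k - 1, by omega⟩ := by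
    simp only [ne_eq, Fin.mk.injEq]; omega
  set z := Equiv.swap (⟨0, by omega⟩ : Fin k) x y with hz
  have hz0 : z ≠ ⟨0, by omega⟩ := by
    intro h
    apply hxy
    have h2 := congrArg (Equiv.swap (⟨0, by omega⟩ : Fin k) x) h
    rw [hz] at h2
    rw [Equiv.swap_apply_self, Equiv.swap_apply_left] at h2
    exact h2.symm
  refine ⟨(Equiv.swap (⟨k - 1, by omega⟩ : Fin k) z).trans
      (Equiv.swap (⟨0, by omega⟩ : Fin k) x), ?_, ?_⟩
  · rw [Equiv.trans_apply, Equiv.swap_apply_of_ne_of_ne h0m hz0.symm,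
      Equiv.swap_apply_left]
  · rw [Equiv.trans_apply, Equiv.swap_apply_left, hz, Equiv.swap_apply_self]

private lemma exists_LR {k : ℕ} (hk : 3 ≤ k) (ci ci' c c' : Fin k)
    (H : ¬(ci = c ∧ ci' = c')) :
    ∃ L R : Fin k ≃ Fin k,
      L ⟨0, by omega⟩ ≠ ci ∧ R ⟨0, by omega⟩ ≠ ci' ∧
      (c = L ⟨0, by omega⟩ ∨ c = L ⟨k - 1, by omega⟩) ∧
      (c' = R ⟨0, by omega⟩ ∨ c' = R ⟨k - 1, by omega⟩) ∧
      (c = c' → L ⟨k - 1, by omega⟩ ≠ R ⟨k - 1, by omega⟩) ∧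
      (c ≠ c' → L ⟨k - 1, by omega⟩ = R ⟨k - 1, by omega⟩) := by
  by_cases hcc : c = c'
  · by_cases hci : ci = c
    · -- ci = c, so ci' ≠ c'
      have hci' : ci' ≠ c' := fun h => H ⟨hci, h⟩
      obtain ⟨x₁, hx₁a, hx₁c⟩ := exists_third hk ci c
      obtain ⟨y₂, -, hy₂c⟩ := exists_third hk c c
      obtain ⟨L, hL1, hL2⟩ := exists_perm2 hk x₁ c hx₁c
      obtain ⟨R, hR1, hR2⟩ := exists_perm2 hk c y₂ (Ne.symm hy₂c)
      refine ⟨L, R, ?_, ?_, ?_, ?_, ?_, ?_⟩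
      · rw [hL1]; exact hx₁a
      · rw [hR1]; exact fun h => hci' (h.symm.trans hcc)
      · right; rw [hL2]
      · left; rw [hR1, hcc]
      · intro _; rw [hL2, hR2]; exact fun h => hy₂c h.symm
      · intro h; exact absurd hcc h
    · -- ci ≠ c
      obtain ⟨y₁, -, hy₁c⟩ := exists_third hk c c
      obtain ⟨x₂, hx₂a, hx₂c⟩ := exists_third hk ci' c
      obtain ⟨L, hL1, hL2⟩ := exists_perm2 hk c y₁ (Ne.symm hy₁c)
      obtain ⟨R, hR1, hR2⟩ := exists_perm2 hk x₂ c hx₂c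
      refine ⟨L, R, ?_, ?_, ?_, ?_, ?_, ?_⟩
      · rw [hL1]; exact fun h => hci h.symm
      · rw [hR1]; exact hx₂a
      · left; rw [hL1]
      · right; rw [hR2, hcc]
      · intro _; rw [hL2, hR2]; exact hy₁c
      · intro h; exact absurd hcc h
  · by_cases hci : ci = c
    · -- ci = c, ci' ≠ c'
      have hci' : ci' ≠ c' := fun h => H ⟨hci, h⟩
      obtain ⟨x₁, hx₁a, hx₁c⟩ := exists_third hk ci c
      obtain ⟨L, hL1, hL2⟩ := exists_perm2 hk x₁ c hx₁c
      obtain ⟨R, hR1, hR2⟩ := exists_perm2 hk c' c (Ne.symm hcc)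
      refine ⟨L, R, ?_, ?_, ?_, ?_, ?_, ?_⟩
      · rw [hL1]; exact hx₁a
      · rw [hR1]; exact fun h => hci' h.symm
      · right; rw [hL2]
      · left; rw [hR1]
      · intro h; exact absurd h hcc
      · intro _; rw [hL2, hR2]
    · -- ci ≠ c
      obtain ⟨x₂, hx₂a, hx₂c⟩ := exists_third hk ci' c'
      obtain ⟨L, hL1, hL2⟩ := exists_perm2 hk c c' hcc
      obtain ⟨R, hR1, hR2⟩ := exists_perm2 hk x₂ c' hx₂c
      refine ⟨L, R, ?_, ?_, ?_, ?_, ?_, ?_⟩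
      · rw [hL1]; exact fun h => hci h.symm
      · rw [hR1]; exact hx₂a
      · left; rw [hL1]
      · right; rw [hR2]
      · intro h; exact absurd h hcc
      · intro _; rw [hL2, hR2]

private def crel (k : ℕ) (e : I → Fin k → J) (x y : ColV k e) : Prop :=
  (∃ s t : Fin (Mtotal k e), (s : ℕ) < (t : ℕ) ∧ (t : ℕ) < (s : ℕ) + k ∧
      x = preV s ∧ y = preV t) ∨
  (∃ (q : Coll k e) (a b : Fin k), a ≠ b ∧
      x = gadV (Lv q a) ∧ y = gadV (Lv q b)) ∨
  (∃ (q : Coll k e) (a b : Fin k), a ≠ b ∧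
      x = gadV (Rv q a) ∧ y = gadV (Rv q b)) ∨
  (∃ (q : Coll k e) (a : Fin k), q.1.2.1 = q.1.2.2 ∧ (a : ℕ) = k - 1 ∧
      x = gadV (Lv q a) ∧ y = gadV (Rv q a)) ∨
  (∃ (q : Coll k e) (a : Fin k), (a : ℕ) = 0 ∧
      x = pigV q.1.1.1 ∧ y = gadV (Lv q a)) ∨
  (∃ (q : Coll k e) (a : Fin k), (a : ℕ) = 0 ∧
      x = pigV q.1.1.2 ∧ y = gadV (Rv q a)) ∨
  (∃ (q : Coll k e) (a : Fin k), 1 ≤ (a : ℕ) ∧ (a : ℕ) ≤ k - 2 ∧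
      x = preV (wpos q) ∧ y = gadV (Lv q a)) ∨
  (∃ (q : Coll k e) (a : Fin k), 1 ≤ (a : ℕ) ∧ (a : ℕ) ≤ k - 2 ∧
      x = preV (wpos' q) ∧ y = gadV (Rv q a))

private lemma cadj {k : ℕ} {e : I → Fin k → J} {u v : ColV k e} :
    (colourGraph k e).Adj u v ↔ u ≠ v ∧ (crel k e u v ∨ crel k e v u) :=
  SimpleGraph.fromRel_adj _ u v

private lemma gadV_inj {k : ℕ} {e : I → Fin k → J} :
    Function.Injective (gadV (k := k) (e := e)) := fun x y h =>
  Sum.inl_injective (Sum.inr_injective h)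

private lemma Rv_snd {k : ℕ} {e : I → Fin k → J} (q : Coll k e) (a : Fin k) :
    (Rv q a).2.1.2 = a := by
  unfold Rv
  by_cases h : (a : ℕ) = k - 1 ∧ q.1.2.1 ≠ q.1.2.2
  · exact congrArg (fun x : GadV k e => x.2.1.2)
      (show Rv q a = ⟨q, ⟨(false, a), by simp⟩⟩ from dif_pos h)
  · exact congrArg (fun x : GadV k e => x.2.1.2)
      (show Rv q a = ⟨q, ⟨(true, a), fun hcon => h ⟨hcon.2.1, hcon.2.2⟩⟩⟩ from dif_neg h)

private lemma Rv_fst_of_eq {k : ℕ} {e : I → Fin k → J} (q : Coll k e) (a : Fin k)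
    (hcc : q.1.2.1 = q.1.2.2) : (Rv q a).2.1.1 = true := by
  unfold Rv
  exact congrArg (fun x : GadV k e => x.2.1.1)
    (show Rv q a = ⟨q, ⟨(true, a), fun hcon => hcon.2.2 hcc⟩⟩ from
      dif_neg (fun h : (a : ℕ) = k - 1 ∧ q.1.2.1 ≠ q.1.2.2 => h.2 hcc))

private lemma Rv_eq_Lv {k : ℕ} {e : I → Fin k → J} (hk : 0 < k) (q : Coll k e)
    (hcc : q.1.2.1 ≠ q.1.2.2) :
    Rv q ⟨k - 1, by omega⟩ = Lv q ⟨k - 1, by omega⟩ := by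
  unfold Rv Lv; exact dif_pos ⟨rfl, hcc⟩

private lemma pigV_ne_gadV {k : ℕ} {e : I → Fin k → J} (i : I) (x : GadV k e) :
    pigV i ≠ gadV x := fun h =>
  Sum.inl_ne_inr (show (Sum.inl i : I ⊕ GadV k e ⊕ Fin (Mtotal k e)) = Sum.inr (Sum.inl x) from h)

private lemma preV_ne_gadV {k : ℕ} {e : I → Fin k → J} (t : Fin (Mtotal k e))
    (x : GadV k e) : preV t ≠ gadV x := fun h =>
  Sum.inr_ne_inl (Sum.inr_injective
    (show (Sum.inr (Sum.inr t) : I ⊕ GadV k e ⊕ Fin (Mtotal k e)) = Sum.inr (Sum.inl x) from h))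

private lemma preV_ne_preV {k : ℕ} {e : I → Fin k → J} {s t : Fin (Mtotal k e)}
    (h : s ≠ t) : preV (e := e) s ≠ preV t := fun hh =>
  h (Sum.inr_injective (Sum.inr_injective hh))

private lemma gadV_Lv_ne {k : ℕ} {e : I → Fin k → J} (q : Coll k e) {a b : Fin k}
    (h : a ≠ b) : gadV (Lv q a) ≠ gadV (Lv q b) := fun hh => h (by
  have h2 : (Lv q a).2.1.2 = (Lv q b).2.1.2 :=
    congrArg (fun x : GadV k e => x.2.1.2) (gadV_inj hh)
  exact h2)

private lemma gadV_Rv_ne {k : ℕ} {e : I → Fin k → J} (q : Coll k e) {a b : Fin k}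
    (h : a ≠ b) : gadV (Rv q a) ≠ gadV (Rv q b) := fun hh => h (by
  have h2 : (Rv q a).2.1.2 = (Rv q b).2.1.2 :=
    congrArg (fun x : GadV k e => x.2.1.2) (gadV_inj hh)
  rwa [Rv_snd, Rv_snd] at h2)

private lemma gadV_Lv_ne_Rv {k : ℕ} {e : I → Fin k → J} (q : Coll k e) (a : Fin k)
    (hcc : q.1.2.1 = q.1.2.2) : gadV (Lv q a) ≠ gadV (Rv q a) := fun hh => by
  have h2 : (Lv q a).2.1.1 = (Rv q a).2.1.1 :=
    congrArg (fun x : GadV k e => x.2.1.1) (gadV_inj hh)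
  rw [Rv_fst_of_eq q a hcc] at h2
  exact Bool.noConfusion h2

private lemma adj_pre {k : ℕ} {e : I → Fin k → J} (s t : Fin (Mtotal k e))
    (h1 : (s : ℕ) < (t : ℕ)) (h2 : (t : ℕ) < (s : ℕ) + k) :
    (colourGraph k e).Adj (preV s) (preV t) :=
  cadj.2 ⟨preV_ne_preV (Fin.ne_of_val_ne (Nat.ne_of_lt h1)),
    Or.inl (Or.inl ⟨s, t, h1, h2, rfl, rfl⟩)⟩

private lemma adj_LL {k : ℕ} {e : I → Fin k → J} (q : Coll k e) {a b : Fin k}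
    (h : a ≠ b) : (colourGraph k e).Adj (gadV (Lv q a)) (gadV (Lv q b)) :=
  cadj.2 ⟨gadV_Lv_ne q h, Or.inl (Or.inr (Or.inl ⟨q, a, b, h, rfl, rfl⟩))⟩

private lemma adj_RR {k : ℕ} {e : I → Fin k → J} (q : Coll k e) {a b : Fin k}
    (h : a ≠ b) : (colourGraph k e).Adj (gadV (Rv q a)) (gadV (Rv q b)) :=
  cadj.2 ⟨gadV_Rv_ne q h, Or.inl (Or.inr (Or.inr (Or.inl ⟨q, a, b, h, rfl, rfl⟩)))⟩

private lemma adj_LR {k : ℕ} {e : I → Fin k → J} (q : Coll k e) (a : Fin k)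
    (hcc : q.1.2.1 = q.1.2.2) (ha : (a : ℕ) = k - 1) :
    (colourGraph k e).Adj (gadV (Lv q a)) (gadV (Rv q a)) :=
  cadj.2 ⟨gadV_Lv_ne_Rv q a hcc,
    Or.inl (Or.inr (Or.inr (Or.inr (Or.inl ⟨q, a, hcc, ha, rfl, rfl⟩))))⟩

private lemma adj_pL {k : ℕ} {e : I → Fin k → J} (q : Coll k e) (a : Fin k)
    (ha : (a : ℕ) = 0) : (colourGraph k e).Adj (pigV q.1.1.1) (gadV (Lv q a)) :=
  cadj.2 ⟨pigV_ne_gadV _ _,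
    Or.inl (Or.inr (Or.inr (Or.inr (Or.inr (Or.inl ⟨q, a, ha, rfl, rfl⟩)))))⟩

private lemma adj_pR {k : ℕ} {e : I → Fin k → J} (q : Coll k e) (a : Fin k)
    (ha : (a : ℕ) = 0) : (colourGraph k e).Adj (pigV q.1.1.2) (gadV (Rv q a)) :=
  cadj.2 ⟨pigV_ne_gadV _ _,
    Or.inl (Or.inr (Or.inr (Or.inr (Or.inr (Or.inr (Or.inl ⟨q, a, ha, rfl, rfl⟩))))))⟩

private lemma adj_wL {k : ℕ} {e : I → Fin k → J} (q : Coll k e) (a : Fin k)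
    (h1 : 1 ≤ (a : ℕ)) (h2 : (a : ℕ) ≤ k - 2) :
    (colourGraph k e).Adj (preV (wpos q)) (gadV (Lv q a)) :=
  cadj.2 ⟨preV_ne_gadV _ _,
    Or.inl (Or.inr (Or.inr (Or.inr (Or.inr (Or.inr (Or.inr (Or.inl
      ⟨q, a, h1, h2, rfl, rfl⟩)))))))⟩

private lemma adj_wR {k : ℕ} {e : I → Fin k → J} (q : Coll k e) (a : Fin k)
    (h1 : 1 ≤ (a : ℕ)) (h2 : (a : ℕ) ≤ k - 2) :
    (colourGraph k e).Adj (preV (wpos' q)) (gadV (Rv q a)) :=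
  cadj.2 ⟨preV_ne_gadV _ _,
    Or.inl (Or.inr (Or.inr (Or.inr (Or.inr (Or.inr (Or.inr (Or.inr
      ⟨q, a, h1, h2, rfl, rfl⟩)))))))⟩

private lemma wpos_mod {k : ℕ} {e : I → Fin k → J} (q : Coll k e) :
    ((wpos q : Fin (Mtotal k e)) : ℕ) % k = (q.1.2.1 : ℕ) := by
  have h : ((wpos q : Fin (Mtotal k e)) : ℕ) = 2 * collIdx q * k + (q.1.2.1 : ℕ) := rfl
  rw [h, Nat.add_comm, Nat.add_mul_mod_self_right, Nat.mod_eq_of_lt q.1.2.1.isLt]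

private lemma wpos'_mod {k : ℕ} {e : I → Fin k → J} (q : Coll k e) :
    ((wpos' q : Fin (Mtotal k e)) : ℕ) % k = (q.1.2.2 : ℕ) := by
  have h : ((wpos' q : Fin (Mtotal k e)) : ℕ)
      = (2 * collIdx q + 1) * k + (q.1.2.2 : ℕ) := rfl
  rw [h, Nat.add_comm, Nat.add_mul_mod_self_right, Nat.mod_eq_of_lt q.1.2.2.isLt]

theorem stmt_13 (k : ℕ) (hk : 3 ≤ k) (e : I → Fin k → J)
    (he : ∀ i, Function.Injective (e i)) :
    (∃ χ : ColV k e → Fin k,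
      ∀ u v, (colourGraph k e).Adj u v → χ u ≠ χ v) ↔
    (∃ f : I → J, Function.Injective f ∧ ∀ i, ∃ c : Fin k, f i = e i c) := by
  classical
  have hkpos : 0 < k := by omega
  have hkM : k ≤ Mtotal k e := Nat.le_add_left _ _
  constructor
  · rintro ⟨χ, hχ⟩
    set σ : Fin k → Fin k :=
      fun a => χ (preV ⟨a.val, lt_of_lt_of_le a.isLt hkM⟩) with hσ
    have σinj : Function.Injective σ := by
      intro a b hab
      by_contra hne
      have hv : (a : ℕ) ≠ (b : ℕ) := fun h => hne (Fin.ext h)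
      rcases Nat.lt_or_ge a.val b.val with hlt | hge
      · have H2 : (b : ℕ) < (a : ℕ) + k := by have := b.isLt; omega
        exact hχ _ _ (adj_pre ⟨a.val, lt_of_lt_of_le a.isLt hkM⟩
          ⟨b.val, lt_of_lt_of_le b.isLt hkM⟩ hlt H2) hab
      · have H1 : (b : ℕ) < (a : ℕ) := by omega
        have H2 : (a : ℕ) < (b : ℕ) + k := by have := a.isLt; omega
        exact hχ _ _ (adj_pre ⟨b.val, lt_of_lt_of_le b.isLt hkM⟩
          ⟨a.val, lt_of_lt_of_le a.isLt hkM⟩ H1 H2) hab.symm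
    have σsurj := Finite.injective_iff_surjective.1 σinj
    have period : ∀ t (ht : t < Mtotal k e),
        χ (preV ⟨t, ht⟩) = σ ⟨t % k, Nat.mod_lt t hkpos⟩ := by
      intro t
      induction t using Nat.strong_induction_on with
      | _ t IH =>
        intro ht
        by_cases htk : t < k
        · exact congrArg χ (congrArg preV
            (Fin.ext (by simp [Nat.mod_eq_of_lt htk])))
        · push_neg at htk
          have hstep : χ (preV ⟨t, ht⟩) = χ (preV ⟨t - k, by omega⟩) := by
            have ginj : Function.Injective
                (fun j : Fin k =>
                  χ (preV ⟨t - k + j.val, by have := j.isLt; omega⟩)) := by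
              intro j1 j2 hj
              by_contra hne
              have hv : (j1 : ℕ) ≠ (j2 : ℕ) := fun h => hne (Fin.ext h)
              rcases Nat.lt_or_ge j1.val j2.val with hlt | hge
              · have H1 : t - k + (j1 : ℕ) < t - k + (j2 : ℕ) := by omega
                have H2 : t - k + (j2 : ℕ) < t - k + (j1 : ℕ) + k := by
                  have := j2.isLt; omega
                exact hχ _ _ (adj_pre ⟨t - k + j1.val, by have := j1.isLt; omega⟩
                  ⟨t - k + j2.val, by have := j2.isLt; omega⟩ H1 H2) hj
              · have H1 : t - k + (j2 : ℕ) < t - k + (j1 : ℕ) := by omega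
                have H2 : t - k + (j1 : ℕ) < t - k + (j2 : ℕ) + k := by
                  have := j1.isLt; omega
                exact hχ _ _ (adj_pre ⟨t - k + j2.val, by have := j2.isLt; omega⟩
                  ⟨t - k + j1.val, by have := j1.isLt; omega⟩ H1 H2) hj.symm
            obtain ⟨j0, hj0⟩ :=
              (Finite.injective_iff_surjective.1 ginj) (χ (preV ⟨t, ht⟩))
            have hj0v : (j0 : ℕ) = 0 := by
              by_contra h0
              have H1 : t - k + (j0 : ℕ) < t := by have := j0.isLt; omega
              have H2 : t < t - k + (j0 : ℕ) + k := by have := j0.isLt; omega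
              have hadj := adj_pre ⟨t - k + j0.val, by have := j0.isLt; omega⟩
                ⟨t, ht⟩ H1 H2
              exact hχ _ _ hadj hj0
            rw [← hj0]
            exact congrArg χ (congrArg preV
              (Fin.ext (show t - k + (j0 : ℕ) = t - k by omega)))
          rw [hstep, IH (t - k) (by omega) (by omega)]
          exact congrArg σ (Fin.ext (show (t - k) % k = t % k by
            conv_rhs => rw [← Nat.sub_add_cancel htk]
            rw [Nat.add_mod_right]))
    refine ⟨fun i => e i ((Equiv.ofBijective σ ⟨σinj, σsurj⟩).symm (χ (pigV i))),
      ?_, fun i => ⟨_, rfl⟩⟩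
    intro i i' hfe0
    by_contra hii
    have hfe : e i ((Equiv.ofBijective σ ⟨σinj, σsurj⟩).symm (χ (pigV i)))
        = e i' ((Equiv.ofBijective σ ⟨σinj, σsurj⟩).symm (χ (pigV i'))) := hfe0
    set c := (Equiv.ofBijective σ ⟨σinj, σsurj⟩).symm (χ (pigV i)) with hc
    set c' := (Equiv.ofBijective σ ⟨σinj, σsurj⟩).symm (χ (pigV i')) with hc'
    set q : Coll k e := ⟨((i, i'), (c, c')), hii, hfe⟩ with hqdef
    have hχi : χ (pigV i) = σ c := by
      rw [hc]
      exact (Equiv.apply_symm_apply (Equiv.ofBijective σ ⟨σinj, σsurj⟩) _).symm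
    have hχi' : χ (pigV i') = σ c' := by
      rw [hc']
      exact (Equiv.apply_symm_apply (Equiv.ofBijective σ ⟨σinj, σsurj⟩) _).symm
    have hm : k - 1 < k := by omega
    set m : Fin k := ⟨k - 1, hm⟩ with hmdef
    -- left clique
    have Linj : Function.Injective (fun a : Fin k => χ (gadV (Lv q a))) := by
      intro a b hab
      by_contra hne
      exact hχ _ _ (adj_LL q hne) hab
    obtain ⟨a0, ha0⟩ := (Finite.injective_iff_surjective.1 Linj) (σ c)
    have ha00 : (a0 : ℕ) ≠ 0 := by
      intro h
      have hadj := adj_pL q ⟨0, hkpos⟩ rfl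
      apply hχ _ _ hadj
      show χ (pigV i) = χ (gadV (Lv q ⟨0, hkpos⟩))
      rw [hχi, ← ha0, show a0 = ⟨0, hkpos⟩ from Fin.ext h]
    have ha0mid : ¬(1 ≤ (a0 : ℕ) ∧ (a0 : ℕ) ≤ k - 2) := by
      rintro ⟨h1, h2⟩
      have hadj := adj_wL q a0 h1 h2
      apply hχ _ _ hadj
      have hper := period (wpos q).val (wpos q).isLt
      rw [Fin.eta] at hper
      rw [hper]
      have hvv : (⟨((wpos q : Fin (Mtotal k e)) : ℕ) % k,
          Nat.mod_lt _ hkpos⟩ : Fin k) = c := Fin.ext (wpos_mod q)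
      rw [hvv, ← ha0]
    have ha0v : (a0 : ℕ) = k - 1 := by
      have := a0.isLt
      omega
    have hLm : χ (gadV (Lv q m)) = σ c := by
      have h := ha0
      rw [show a0 = m from Fin.ext (by rw [ha0v])] at h
      exact h
    -- right clique
    have Rinj : Function.Injective (fun a : Fin k => χ (gadV (Rv q a))) := by
      intro a b hab
      by_contra hne
      exact hχ _ _ (adj_RR q hne) hab
    obtain ⟨b0, hb0⟩ := (Finite.injective_iff_surjective.1 Rinj) (σ c')
    have hb00 : (b0 : ℕ) ≠ 0 := by
      intro h
      have hadj := adj_pR q ⟨0, hkpos⟩ rfl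
      apply hχ _ _ hadj
      show χ (pigV i') = χ (gadV (Rv q ⟨0, hkpos⟩))
      rw [hχi', ← hb0, show b0 = ⟨0, hkpos⟩ from Fin.ext h]
    have hb0mid : ¬(1 ≤ (b0 : ℕ) ∧ (b0 : ℕ) ≤ k - 2) := by
      rintro ⟨h1, h2⟩
      have hadj := adj_wR q b0 h1 h2
      apply hχ _ _ hadj
      have hper := period (wpos' q).val (wpos' q).isLt
      rw [Fin.eta] at hper
      rw [hper]
      have hvv : (⟨((wpos' q : Fin (Mtotal k e)) : ℕ) % k,
          Nat.mod_lt _ hkpos⟩ : Fin k) = c' := Fin.ext (wpos'_mod q)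
      rw [hvv, ← hb0]
    have hb0v : (b0 : ℕ) = k - 1 := by
      have := b0.isLt
      omega
    have hRm : χ (gadV (Rv q m)) = σ c' := by
      have h := hb0
      rw [show b0 = m from Fin.ext (by rw [hb0v])] at h
      exact h
    by_cases hcc : c = c'
    · have hadj := adj_LR q m hcc rfl
      exact hχ _ _ hadj (by rw [hLm, hRm, hcc])
    · apply hcc
      apply σinj
      have hid : Rv q m = Lv q m := Rv_eq_Lv hkpos q hcc
      rw [← hLm, ← hRm, hid]
  · rintro ⟨f, hfinj, hf⟩
    choose cf hcf using hf
    have key : ∀ q : Coll k e, ¬(cf q.1.1.1 = q.1.2.1 ∧ cf q.1.1.2 = q.1.2.2) := by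
      rintro q ⟨h1, h2⟩
      apply q.2.1
      apply hfinj
      rw [hcf q.1.1.1, hcf q.1.1.2, h1, h2]
      exact q.2.2
    choose Lq Rq hL0 hR0 hLc hRc hLRne hLReq using
      fun q : Coll k e =>
        exists_LR hk (cf q.1.1.1) (cf q.1.1.2) q.1.2.1 q.1.2.2 (key q)
    set χ : ColV k e → Fin k := fun v =>
      Sum.elim (fun i => cf i)
        (Sum.elim
          (fun x : GadV k e => cond x.2.1.1 (Rq x.1 x.2.1.2) (Lq x.1 x.2.1.2))
          (fun t : Fin (Mtotal k e) => ⟨(t : ℕ) % k, Nat.mod_lt _ hkpos⟩)) v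
      with hχdef
    have EL : ∀ (q : Coll k e) (a : Fin k), χ (gadV (Lv q a)) = Lq q a :=
      fun q a => rfl
    have EP : ∀ t, χ (preV t) = (⟨(t : ℕ) % k, Nat.mod_lt _ hkpos⟩ : Fin k) :=
      fun t => rfl
    have ER : ∀ (q : Coll k e) (a : Fin k), χ (gadV (Rv q a)) = Rq q a := by
      intro q a
      unfold Rv
      by_cases h : (a : ℕ) = k - 1 ∧ q.1.2.1 ≠ q.1.2.2
      · refine (congrArg (fun x => χ (gadV x))
          (show Rv q a = ⟨q, ⟨(false, a), by simp⟩⟩ from dif_pos h)).trans ?_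
        show Lq q a = Rq q a
        have ha : a = ⟨k - 1, by omega⟩ := Fin.ext h.1
        rw [ha]
        exact hLReq q h.2
      · refine (congrArg (fun x => χ (gadV x))
          (show Rv q a = ⟨q, ⟨(true, a), fun hcon => h ⟨hcon.2.1, hcon.2.2⟩⟩⟩ from
            dif_neg h)).trans ?_
        exact rfl
    refine ⟨χ, ?_⟩
    have main : ∀ x y, crel k e x y → χ x ≠ χ y := by
      intro x y hr
      rcases hr with ⟨s, t, h1, h2, rfl, rfl⟩ | ⟨q, a, b, hab, rfl, rfl⟩ |
        ⟨q, a, b, hab, rfl, rfl⟩ | ⟨q, a, hcc, ha, rfl, rfl⟩ |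
        ⟨q, a, ha, rfl, rfl⟩ | ⟨q, a, ha, rfl, rfl⟩ |
        ⟨q, a, h1, h2, rfl, rfl⟩ | ⟨q, a, h1, h2, rfl, rfl⟩
      · rw [EP, EP]
        intro h
        exact mod_ne_of_window h1 h2 (congrArg Fin.val h)
      · rw [EL, EL]; exact fun h => hab ((Lq q).injective h)
      · rw [ER, ER]; exact fun h => hab ((Rq q).injective h)
      · rw [EL, ER]
        have ha' : a = ⟨k - 1, by omega⟩ := Fin.ext ha
        rw [ha']
        exact hLRne q hcc
      · have ha' : a = ⟨0, hkpos⟩ := Fin.ext ha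
        show cf q.1.1.1 ≠ χ (gadV (Lv q a))
        rw [EL, ha']
        exact fun h => hL0 q h.symm
      · have ha' : a = ⟨0, hkpos⟩ := Fin.ext ha
        show cf q.1.1.2 ≠ χ (gadV (Rv q a))
        rw [ER, ha']
        exact fun h => hR0 q h.symm
      · rw [EP, EL]
        have hv : (⟨((wpos q : Fin (Mtotal k e)) : ℕ) % k,
            Nat.mod_lt _ hkpos⟩ : Fin k) = q.1.2.1 := Fin.ext (wpos_mod q)
        intro h
        have h' := hv.symm.trans h
        rcases hLc q with hc | hc
        · have h2' := congrArg Fin.val ((Lq q).injective (hc.symm.trans h'))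
          simp at h2'; omega
        · have h2' := congrArg Fin.val ((Lq q).injective (hc.symm.trans h'))
          simp at h2'; omega
      · rw [EP, ER]
        have hv : (⟨((wpos' q : Fin (Mtotal k e)) : ℕ) % k,
            Nat.mod_lt _ hkpos⟩ : Fin k) = q.1.2.2 := Fin.ext (wpos'_mod q)
        intro h
        have h' := hv.symm.trans h
        rcases hRc q with hc | hc
        · have h2' := congrArg Fin.val ((Rq q).injective (hc.symm.trans h'))
          simp at h2'; omega
        · have h2' := congrArg Fin.val ((Rq q).injective (hc.symm.trans h'))
          simp at h2'; omega
    intro u v hadj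
    obtain ⟨hne, hrel | hrel⟩ := cadj.1 hadj
    · exact main u v hrel
    · exact Ne.symm (main v u hrel)

end ColouringReduction
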